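/- Let S and A be nonempty finite types, d a natural number, and θ₀ ∈ ℝ^d. Let ρ : S → ℝ be a probability mass function on S (ρ(s) ≥ 0 and ∑_s ρ(s) = 1), and let π : ℝ^d → S → A → ℝ satisfy: π(θ)(s)(a) > 0 for all θ, s, a; ∑_{a ∈ A} π(θ)(s)(a) = 1 for all θ, s; and for each s, a the map θ ↦ π(θ)(s)(a) is differentiable at θ₀. Then for any functions δ : S × A → ℝ and g : S → ℝ, ∑_{s ∈ S} ∑_{a ∈ A} ρ(s) · π(θ₀)(s)(a) · (δ(s,a) + g(s)) • D(s,a) = ∑_{s ∈ S} ∑_{a ∈ A} ρ(s) · π(θ₀)(s)(a) · δ(s,a) • D(s,a), where D(s,a) ∈ ℝ^d denotes the gradient at θ₀ of the map θ ↦ log π(θ)(s)(a). -/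

import Mathlib

open InnerProductSpace

lemma grad_log_eq {E : Type*} [NormedAddCommGroup E] [InnerProductSpace ℝ E]
    [CompleteSpace E] (f : E → ℝ) (x : E) (hf : DifferentiableAt ℝ f x)
    (hx : f x ≠ 0) :
    gradient (fun y => Real.log (f y)) x = (f x)⁻¹ • gradient f x := by
  have h : HasFDerivAt (fun y => Real.log (f y)) ((f x)⁻¹ • fderiv ℝ f x) x := by
    have := (Real.hasDerivAt_log hx).comp_hasFDerivAt x hf.hasFDerivAt
    exact this
  rw [gradient, h.fderiv, map_smul, gradient]

theorem state_function_baseline_does_not_change_policy_gradient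
    {S A : Type*} [Fintype S] [Fintype A] [Nonempty S] [Nonempty A]
    (d : ℕ) (θ₀ : EuclideanSpace ℝ (Fin d))
    (ρ : S → ℝ) (hρ0 : ∀ s, 0 ≤ ρ s) (hρ1 : ∑ s, ρ s = 1)
    (p : EuclideanSpace ℝ (Fin d) → S → A → ℝ)
    (hpos : ∀ θ s a, 0 < p θ s a)
    (hsum : ∀ θ s, ∑ a, p θ s a = 1)
    (hdiff : ∀ s a, DifferentiableAt ℝ (fun θ => p θ s a) θ₀)
    (δ : S × A → ℝ) (g : S → ℝ) :
    ∑ s, ∑ a, (ρ s * p θ₀ s a * (δ (s, a) + g s)) •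
        gradient (fun θ => Real.log (p θ s a)) θ₀
      = ∑ s, ∑ a, (ρ s * p θ₀ s a * δ (s, a)) •
          gradient (fun θ => Real.log (p θ s a)) θ₀ := by
  have key : ∀ s, ∑ a, (p θ₀ s a) • gradient (fun θ => Real.log (p θ s a)) θ₀ = 0 := by
    intro s
    have h1 : ∀ a : A, (p θ₀ s a) • gradient (fun θ => Real.log (p θ s a)) θ₀
        = gradient (fun θ => p θ s a) θ₀ := by
      intro a
      rw [grad_log_eq _ _ (hdiff s a) (hpos θ₀ s a).ne', smul_smul,
        mul_inv_cancel₀ (hpos θ₀ s a).ne', one_smul]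
    simp_rw [h1]
    have h2 : ∑ a, gradient (fun θ => p θ s a) θ₀
        = gradient (fun θ => ∑ a, p θ s a) θ₀ := by
      unfold gradient
      rw [← map_sum]
      congr 1
      rw [fderiv_fun_sum (fun a _ => hdiff s a)]
    rw [h2]
    have : (fun θ => ∑ a, p θ s a) = fun _ => (1 : ℝ) := funext fun θ => hsum θ s
    rw [this, gradient_fun_const]
  calc ∑ s, ∑ a, (ρ s * p θ₀ s a * (δ (s, a) + g s)) •
        gradient (fun θ => Real.log (p θ s a)) θ₀
      = ∑ s, (∑ a, (ρ s * p θ₀ s a * δ (s, a)) •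
          gradient (fun θ => Real.log (p θ s a)) θ₀
        + (ρ s * g s) • ∑ a, (p θ₀ s a) • gradient (fun θ => Real.log (p θ s a)) θ₀) := by
        refine Finset.sum_congr rfl fun s _ => ?_
        rw [Finset.smul_sum, ← Finset.sum_add_distrib]
        refine Finset.sum_congr rfl fun a _ => ?_
        rw [smul_smul, ← add_smul]
        ring_nf
    _ = _ := by simp [key]
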